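/- arXiv:1807.05177 — 4 statements merged into one kernel-verified Lean document; each statement's English description precedes it below -/
import Mathlib

section
/- Energy dissipation identity: let T > 0 and let (x_i, v_i), i = 1, …, n, be a smooth solution of the controlled Cucker-Smale system on [0, T]. Define the kinetic energy E₁(v) := (1/2)∑_{i=1}^n |v_i|², the potential energy E₂(x) := (M/2)∑_{i=2}^n ∫₀^{|x_{i−1} − x_i − z_{i−1}|²} φ(r) dr, and the dissipation D(x, v) := (K/(2n))∑_{i,j=1}^n ψ(r_{ij})|v_i − v_j|². Then for all 0 ≤ t ≤ T, (d/dt)E₁(v(t)) + (d/dt)E₂(x(t)) + D(x(t), v(t)) = 0. -/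
open scoped BigOperators
open Filter MeasureTheory

noncomputable section

/-- Singular communication weight ψ(r) = r^{-α}. -/
def psiCS (α r : ℝ) : ℝ := r ^ (-α)

/-- Regular communication weight φ(r) = (1+r)^{-β}. -/
def phiCS (β r : ℝ) : ℝ := (1 + r) ^ (-β)

/-- The decentralized control u_i (agents indexed 1,…,n): for 2 ≤ i ≤ n-1,
`u_i = φ(|x_{i-1}-x_i-z_{i-1}|²)(x_{i-1}-x_i-z_{i-1}) - φ(|x_i-x_{i+1}-z_i|²)(x_i-x_{i+1}-z_i)`,
with only the second term for i = 1 and only the first term for i = n. -/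
def uCS {E : Type*} [NormedAddCommGroup E] [NormedSpace ℝ E]
    (n : ℕ) (φ : ℝ → ℝ) (z x : ℕ → E) (i : ℕ) : E :=
  (if 2 ≤ i then φ (‖x (i-1) - x i - z (i-1)‖ ^ 2) • (x (i-1) - x i - z (i-1)) else 0)
    - (if i + 1 ≤ n then φ (‖x i - x (i+1) - z i‖ ^ 2) • (x i - x (i+1) - z i) else 0)

/-- (x, v) is a solution of the controlled Cucker–Smale system
`x_i' = v_i`, `v_i' = (K/n) ∑_{j≠i} ψ(r_{ij})(v_j - v_i) + M u_i` on the time set S. -/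
def IsCSSol {E : Type*} [NormedAddCommGroup E] [NormedSpace ℝ E]
    (n : ℕ) (K M α β : ℝ) (z : ℕ → E) (x v : ℕ → ℝ → E) (S : Set ℝ) : Prop :=
  ∀ i ∈ Finset.Icc 1 n, ∀ t ∈ S,
    HasDerivWithinAt (x i) (v i t) S t ∧
    HasDerivWithinAt (v i)
      ((K / n) • ∑ j ∈ (Finset.Icc 1 n).erase i,
          psiCS α ‖x j t - x i t‖ • (v j t - v i t)
        + M • uCS n (phiCS β) z (fun k => x k t) i) S t

/-- Potential energy E₂(x) = (M/2) ∑_{i=2}^n ∫₀^{|x_{i-1}-x_i-z_{i-1}|²} φ(r) dr. -/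
def E2CS {E : Type*} [NormedAddCommGroup E] [NormedSpace ℝ E]
    (n : ℕ) (M β : ℝ) (z x : ℕ → E) : ℝ :=
  (M / 2) * ∑ i ∈ Finset.Icc 2 n, ∫ r in (0:ℝ)..(‖x (i-1) - x i - z (i-1)‖ ^ 2), phiCS β r

/-- Kinetic energy E₁(v) = (1/2) ∑ᵢ |vᵢ|². -/
def E1CS {E : Type*} [NormedAddCommGroup E] [NormedSpace ℝ E]
    (n : ℕ) (v : ℕ → E) : ℝ :=
  (1 / 2) * ∑ i ∈ Finset.Icc 1 n, ‖v i‖ ^ 2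

/-- Dissipation D(x,v) = (K/(2n)) ∑_{i≠j} ψ(r_{ij}) |v_i - v_j|². -/
def DCS {E : Type*} [NormedAddCommGroup E] [NormedSpace ℝ E]
    (n : ℕ) (K α : ℝ) (x v : ℕ → E) : ℝ :=
  (K / (2 * n)) * ∑ i ∈ Finset.Icc 1 n, ∑ j ∈ (Finset.Icc 1 n).erase i,
    psiCS α ‖x j - x i‖ * ‖v i - v j‖ ^ 2

/-- Velocity fluctuation (1/(4n)) ∑_{i,j} |v_i - v_j|². -/
def VflCS {E : Type*} [NormedAddCommGroup E] [NormedSpace ℝ E]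
    (n : ℕ) (v : ℕ → E) : ℝ :=
  (1 / (4 * n)) * ∑ i ∈ Finset.Icc 1 n, ∑ j ∈ Finset.Icc 1 n, ‖v i - v j‖ ^ 2

open scoped InnerProductSpace

/-- φ is continuous on (-1, ∞). -/
lemma phiCS_continuousOn (β : ℝ) : ContinuousOn (phiCS β) (Set.Ioi (-1 : ℝ)) := by
  intro r hr
  have h1 : (1 : ℝ) + r ≠ 0 := by
    have : (-1 : ℝ) < r := hr
    intro h; nlinarith
  exact ((continuousAt_const.add continuousAt_id).rpow_const (Or.inl h1)).continuousWithinAt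

/-- FTC for the φ-potential at a nonnegative point. -/
lemma phiCS_integral_hasDerivAt (β : ℝ) {y : ℝ} (hy : 0 ≤ y) :
    HasDerivAt (fun u => ∫ r in (0:ℝ)..u, phiCS β r) (phiCS β y) y := by
  have hsub : Set.uIcc (0:ℝ) y ⊆ Set.Ioi (-1 : ℝ) := by
    rw [Set.uIcc_of_le hy]
    intro r hr
    have := hr.1; simp only [Set.mem_Ioi]; linarith
  have hmem : y ∈ Set.Ioi (-1 : ℝ) := by simp only [Set.mem_Ioi]; linarith
  refine intervalIntegral.integral_hasDerivAt_right
    (((phiCS_continuousOn β).mono hsub).intervalIntegrable) ?_ ?_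
  · exact (phiCS_continuousOn β).stronglyMeasurableAtFilter isOpen_Ioi y hmem
  · exact (phiCS_continuousOn β).continuousAt (isOpen_Ioi.mem_nhds hmem)

/-- Cross inner-product identity. -/
lemma innerCrossCS {E : Type*} [NormedAddCommGroup E] [InnerProductSpace ℝ E] (a b : E) :
    ⟪b - a, a⟫_ℝ + ⟪a - b, b⟫_ℝ = -‖a - b‖ ^ 2 := by
  rw [inner_sub_left, inner_sub_left, real_inner_self_eq_norm_sq, real_inner_self_eq_norm_sq,
    norm_sub_sq_real, real_inner_comm b a]
  ring

/-- Index shift for sums over `Icc`. -/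
lemma sumIccShiftCS {M : Type*} [AddCommMonoid M] (n : ℕ) (F : ℕ → M) :
    ∑ i ∈ Finset.Icc 1 (n-1), F (i+1) = ∑ i ∈ Finset.Icc 2 n, F i := by
  refine Finset.sum_nbij' (fun i => i + 1) (fun i => i - 1) ?_ ?_ ?_ ?_ ?_ <;>
    intro a ha <;>
    first
      | rfl
      | (show a + 1 - 1 = a; omega)
      | (show a - 1 + 1 = a; simp only [Finset.mem_Icc] at ha; omega)
      | (simp only [Finset.mem_Icc] at ha ⊢; omega)

lemma filterIccGe2CS (n : ℕ) :
    (Finset.Icc 1 n).filter (fun i => 2 ≤ i) = Finset.Icc 2 n := by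
  ext i; simp only [Finset.mem_filter, Finset.mem_Icc]; omega

lemma filterIccLtCS (n : ℕ) :
    (Finset.Icc 1 n).filter (fun i => i + 1 ≤ n) = Finset.Icc 1 (n-1) := by
  ext i; simp only [Finset.mem_filter, Finset.mem_Icc]; omega

/-- energy dissipation identity
`(d/dt)E₁(v(t)) + (d/dt)E₂(x(t)) + D(x(t),v(t)) = 0`. -/
theorem cs_energy_dissipation
    {d n : ℕ} (hn : 2 ≤ n) (K M α β : ℝ) (hK : 0 ≤ K) (hM : 0 ≤ M)
    (hα : 0 < α) (hβ : 0 < β)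
    (z : ℕ → EuclideanSpace ℝ (Fin d)) (x v : ℕ → ℝ → EuclideanSpace ℝ (Fin d))
    (T : ℝ) (hT : 0 < T)
    (hsol : IsCSSol n K M α β z x v (Set.Icc 0 T)) :
    ∀ t ∈ Set.Icc (0:ℝ) T, ∃ e₁ e₂ : ℝ,
      HasDerivWithinAt (fun s => E1CS n (fun i => v i s)) e₁ (Set.Icc 0 T) t ∧
      HasDerivWithinAt (fun s => E2CS n M β z (fun i => x i s)) e₂ (Set.Icc 0 T) t ∧
      e₁ + e₂ + DCS n K α (fun i => x i t) (fun i => v i t) = 0 := by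
  intro t ht
  have hx : ∀ i ∈ Finset.Icc 1 n, HasDerivWithinAt (x i) (v i t) (Set.Icc 0 T) t :=
    fun i hi => (hsol i hi t ht).1
  have hv : ∀ i ∈ Finset.Icc 1 n, HasDerivWithinAt (v i)
      ((K / n) • ∑ j ∈ (Finset.Icc 1 n).erase i,
          psiCS α ‖x j t - x i t‖ • (v j t - v i t)
        + M • uCS n (phiCS β) z (fun k => x k t) i) (Set.Icc 0 T) t :=
    fun i hi => (hsol i hi t ht).2
  refine ⟨(1/2 : ℝ) * ∑ i ∈ Finset.Icc 1 n,
      (⟪v i t, ((K / n) • ∑ j ∈ (Finset.Icc 1 n).erase i,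
            psiCS α ‖x j t - x i t‖ • (v j t - v i t))
          + M • uCS n (phiCS β) z (fun k => x k t) i⟫_ℝ
        + ⟪((K / n) • ∑ j ∈ (Finset.Icc 1 n).erase i,
            psiCS α ‖x j t - x i t‖ • (v j t - v i t))
          + M • uCS n (phiCS β) z (fun k => x k t) i, v i t⟫_ℝ),
    (M/2 : ℝ) * ∑ i ∈ Finset.Icc 2 n,
      phiCS β (‖x (i-1) t - x i t - z (i-1)‖ ^ 2) *
        (⟪x (i-1) t - x i t - z (i-1), v (i-1) t - v i t⟫_ℝ
          + ⟪v (i-1) t - v i t, x (i-1) t - x i t - z (i-1)⟫_ℝ),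
    ?_, ?_, ?_⟩
  · -- derivative of E₁
    have hsum : HasDerivWithinAt (fun s => ∑ i ∈ Finset.Icc 1 n, ‖v i s‖ ^ 2)
        (∑ i ∈ Finset.Icc 1 n,
          (⟪v i t, ((K / n) • ∑ j ∈ (Finset.Icc 1 n).erase i,
                psiCS α ‖x j t - x i t‖ • (v j t - v i t))
              + M • uCS n (phiCS β) z (fun k => x k t) i⟫_ℝ
            + ⟪((K / n) • ∑ j ∈ (Finset.Icc 1 n).erase i,
                psiCS α ‖x j t - x i t‖ • (v j t - v i t))
              + M • uCS n (phiCS β) z (fun k => x k t) i, v i t⟫_ℝ)) (Set.Icc 0 T) t :=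
      HasDerivWithinAt.fun_sum (fun i hi => by
        simpa only [real_inner_self_eq_norm_sq] using (hv i hi).inner ℝ (hv i hi))
    simpa only [E1CS] using HasDerivWithinAt.const_mul (𝕜 := ℝ) (𝔸 := ℝ) (1/2 : ℝ) hsum
  · -- derivative of E₂
    have hE2term : ∀ i ∈ Finset.Icc 2 n,
        HasDerivWithinAt (fun s => ∫ r in (0:ℝ)..(‖x (i-1) s - x i s - z (i-1)‖ ^ 2), phiCS β r)
          (phiCS β (‖x (i-1) t - x i t - z (i-1)‖ ^ 2) *
            (⟪x (i-1) t - x i t - z (i-1), v (i-1) t - v i t⟫_ℝ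
              + ⟪v (i-1) t - v i t, x (i-1) t - x i t - z (i-1)⟫_ℝ)) (Set.Icc 0 T) t := by
      intro i hi
      have hi' : i - 1 ∈ Finset.Icc 1 n ∧ i ∈ Finset.Icc 1 n := by
        simp only [Finset.mem_Icc] at hi ⊢; omega
      have hw : HasDerivWithinAt (fun s => x (i-1) s - x i s - z (i-1))
          (v (i-1) t - v i t) (Set.Icc 0 T) t :=
        ((hx _ hi'.1).sub (hx _ hi'.2)).sub_const _
      have hg : HasDerivWithinAt (fun s => ‖x (i-1) s - x i s - z (i-1)‖ ^ 2)
          (⟪x (i-1) t - x i t - z (i-1), v (i-1) t - v i t⟫_ℝ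
            + ⟪v (i-1) t - v i t, x (i-1) t - x i t - z (i-1)⟫_ℝ) (Set.Icc 0 T) t := by
        simpa only [real_inner_self_eq_norm_sq] using hw.inner ℝ hw
      have hF := phiCS_integral_hasDerivAt β (sq_nonneg ‖x (i-1) t - x i t - z (i-1)‖)
      exact HasDerivAt.comp_hasDerivWithinAt_of_eq (𝕜 := ℝ) (hh₂ := hF) (hh := hg) (hy := rfl)
    have hsum : HasDerivWithinAt
        (fun s => ∑ i ∈ Finset.Icc 2 n,
          ∫ r in (0:ℝ)..(‖x (i-1) s - x i s - z (i-1)‖ ^ 2), phiCS β r)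
        (∑ i ∈ Finset.Icc 2 n,
          phiCS β (‖x (i-1) t - x i t - z (i-1)‖ ^ 2) *
            (⟪x (i-1) t - x i t - z (i-1), v (i-1) t - v i t⟫_ℝ
              + ⟪v (i-1) t - v i t, x (i-1) t - x i t - z (i-1)⟫_ℝ)) (Set.Icc 0 T) t :=
      HasDerivWithinAt.fun_sum (fun i hi => hE2term i hi)
    simpa only [E2CS] using HasDerivWithinAt.const_mul (𝕜 := ℝ) (𝔸 := ℝ) (M/2 : ℝ) hsum
  · -- the algebraic identity
    have h1 : (1/2 : ℝ) * ∑ i ∈ Finset.Icc 1 n,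
        (⟪v i t, ((K / n) • ∑ j ∈ (Finset.Icc 1 n).erase i,
              psiCS α ‖x j t - x i t‖ • (v j t - v i t))
            + M • uCS n (phiCS β) z (fun k => x k t) i⟫_ℝ
          + ⟪((K / n) • ∑ j ∈ (Finset.Icc 1 n).erase i,
              psiCS α ‖x j t - x i t‖ • (v j t - v i t))
            + M • uCS n (phiCS β) z (fun k => x k t) i, v i t⟫_ℝ)
        = (K/(n:ℝ)) * (∑ i ∈ Finset.Icc 1 n, ∑ j ∈ (Finset.Icc 1 n).erase i,
              psiCS α ‖x j t - x i t‖ * ⟪v j t - v i t, v i t⟫_ℝ)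
          + M * ∑ i ∈ Finset.Icc 1 n, ⟪uCS n (phiCS β) z (fun k => x k t) i, v i t⟫_ℝ := by
      rw [Finset.mul_sum, Finset.mul_sum, Finset.mul_sum, ← Finset.sum_add_distrib]
      refine Finset.sum_congr rfl fun i _ => ?_
      have hc : ∀ y : EuclideanSpace ℝ (Fin d), ⟪v i t, y⟫_ℝ = ⟪y, v i t⟫_ℝ :=
        fun y => real_inner_comm _ _
      simp only [hc, inner_add_left, sum_inner, real_inner_smul_left]
      ring
    have hswap : (∑ i ∈ Finset.Icc 1 n, ∑ j ∈ (Finset.Icc 1 n).erase i,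
          psiCS α ‖x j t - x i t‖ * ⟪v j t - v i t, v i t⟫_ℝ)
        = ∑ i ∈ Finset.Icc 1 n, ∑ j ∈ (Finset.Icc 1 n).erase i,
          psiCS α ‖x j t - x i t‖ * ⟪v i t - v j t, v j t⟫_ℝ := by
      have hcond : ∀ i j : ℕ, i ∈ Finset.Icc 1 n ∧ j ∈ (Finset.Icc 1 n).erase i ↔
          i ∈ (Finset.Icc 1 n).erase j ∧ j ∈ Finset.Icc 1 n := by
        intro i j
        simp only [Finset.mem_erase, Finset.mem_Icc]
        omega
      rw [Finset.sum_comm' hcond]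
      refine Finset.sum_congr rfl fun i _ => Finset.sum_congr rfl fun j _ => ?_
      rw [norm_sub_rev]
    have hPsum : (∑ i ∈ Finset.Icc 1 n, ∑ j ∈ (Finset.Icc 1 n).erase i,
          psiCS α ‖x j t - x i t‖ * ⟪v j t - v i t, v i t⟫_ℝ)
        + (∑ i ∈ Finset.Icc 1 n, ∑ j ∈ (Finset.Icc 1 n).erase i,
          psiCS α ‖x j t - x i t‖ * ⟪v i t - v j t, v j t⟫_ℝ)
        = -∑ i ∈ Finset.Icc 1 n, ∑ j ∈ (Finset.Icc 1 n).erase i,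
            psiCS α ‖x j t - x i t‖ * ‖v i t - v j t‖ ^ 2 := by
      rw [← Finset.sum_add_distrib, ← Finset.sum_neg_distrib]
      refine Finset.sum_congr rfl fun i _ => ?_
      rw [← Finset.sum_add_distrib, ← Finset.sum_neg_distrib]
      refine Finset.sum_congr rfl fun j _ => ?_
      rw [← mul_add, innerCrossCS (v i t) (v j t)]
      ring
    have hP : (∑ i ∈ Finset.Icc 1 n, ∑ j ∈ (Finset.Icc 1 n).erase i,
          psiCS α ‖x j t - x i t‖ * ⟪v j t - v i t, v i t⟫_ℝ)
        = -(∑ i ∈ Finset.Icc 1 n, ∑ j ∈ (Finset.Icc 1 n).erase i,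
            psiCS α ‖x j t - x i t‖ * ‖v i t - v j t‖ ^ 2) / 2 := by
      rw [hswap] at hPsum ⊢
      linarith
    have hU : (∑ i ∈ Finset.Icc 1 n, ⟪uCS n (phiCS β) z (fun k => x k t) i, v i t⟫_ℝ)
        = -∑ i ∈ Finset.Icc 2 n, phiCS β (‖x (i-1) t - x i t - z (i-1)‖ ^ 2) *
            ⟪x (i-1) t - x i t - z (i-1), v (i-1) t - v i t⟫_ℝ := by
      have hterm : ∀ i ∈ Finset.Icc 1 n, ⟪uCS n (phiCS β) z (fun k => x k t) i, v i t⟫_ℝ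
          = (if 2 ≤ i then phiCS β (‖x (i-1) t - x i t - z (i-1)‖ ^ 2) *
                ⟪x (i-1) t - x i t - z (i-1), v i t⟫_ℝ else 0)
            - (if i + 1 ≤ n then phiCS β (‖x i t - x (i+1) t - z i‖ ^ 2) *
                ⟪x i t - x (i+1) t - z i, v i t⟫_ℝ else 0) := by
        intro i _
        simp only [uCS]
        rw [inner_sub_left]
        congr 1 <;> split <;>
          first
            | exact real_inner_smul_left _ _ _
            | exact inner_zero_left _
      rw [Finset.sum_congr rfl hterm, Finset.sum_sub_distrib,
        ← Finset.sum_filter, ← Finset.sum_filter, filterIccGe2CS, filterIccLtCS]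
      have hshift : (∑ i ∈ Finset.Icc 1 (n-1), phiCS β (‖x i t - x (i+1) t - z i‖ ^ 2) *
            ⟪x i t - x (i+1) t - z i, v i t⟫_ℝ)
          = ∑ i ∈ Finset.Icc 2 n, phiCS β (‖x (i-1) t - x i t - z (i-1)‖ ^ 2) *
              ⟪x (i-1) t - x i t - z (i-1), v (i-1) t⟫_ℝ := by
        rw [← sumIccShiftCS n (fun i => phiCS β (‖x (i-1) t - x i t - z (i-1)‖ ^ 2) *
              ⟪x (i-1) t - x i t - z (i-1), v (i-1) t⟫_ℝ)]
        refine Finset.sum_congr rfl fun i _ => ?_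
        simp
      rw [hshift, ← Finset.sum_sub_distrib, ← Finset.sum_neg_distrib]
      refine Finset.sum_congr rfl fun i _ => ?_
      rw [← mul_sub, inner_sub_right]
      ring
    have h2 : (M/2 : ℝ) * ∑ i ∈ Finset.Icc 2 n,
        phiCS β (‖x (i-1) t - x i t - z (i-1)‖ ^ 2) *
          (⟪x (i-1) t - x i t - z (i-1), v (i-1) t - v i t⟫_ℝ
            + ⟪v (i-1) t - v i t, x (i-1) t - x i t - z (i-1)⟫_ℝ)
        = M * ∑ i ∈ Finset.Icc 2 n, phiCS β (‖x (i-1) t - x i t - z (i-1)‖ ^ 2) *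
            ⟪x (i-1) t - x i t - z (i-1), v (i-1) t - v i t⟫_ℝ := by
      rw [Finset.mul_sum, Finset.mul_sum]
      refine Finset.sum_congr rfl fun i _ => ?_
      rw [real_inner_comm (v (i-1) t - v i t)]
      ring
    rw [h1, h2, hP, hU]
    simp only [DCS]
    ring
end
end

section
/- Sharpened Young-type inequality (Lemma 6.1): let a_1, …, a_{n−1} be vectors in ℝ^d. Then there exists a sufficiently small δ ∈ (0, 1) (independent of the vectors, depending only on n) such that −∑_{i=1}^{n−1} |a_i|² + ∑_{i=1}^{n−2} ⟨a_i, a_{i+1}⟩ ≤ −δⁿ ∑_{i=1}^{n−1} |a_i|². -/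
open scoped BigOperators RealInnerProductSpace

set_option maxHeartbeats 800000 in
/-- Lemma 6.1: a sharpened Young-type inequality: there is a sufficiently
small δ ∈ (0,1), depending only on n, such that for all vectors a_1, …, a_{n-1} in ℝ^d,
`-∑_{i=1}^{n-1} |a_i|² + ∑_{i=1}^{n-2} ⟨a_i, a_{i+1}⟩ ≤ -δ^n ∑_{i=1}^{n-1} |a_i|²`. -/
theorem sharpened_young (n d : ℕ) (hn : 2 ≤ n) :
    ∃ δ ∈ Set.Ioo (0:ℝ) 1,
      ∀ a : ℕ → EuclideanSpace ℝ (Fin d),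
        (-∑ i ∈ Finset.Icc 1 (n-1), ‖a i‖ ^ 2)
            + (∑ i ∈ Finset.Icc 1 (n-2), ⟪a i, a (i+1)⟫)
          ≤ -δ ^ n * ∑ i ∈ Finset.Icc 1 (n-1), ‖a i‖ ^ 2 := by
  have hnR : (2:ℝ) ≤ (n:ℝ) := by exact_mod_cast hn
  set δ : ℝ := 1 / (4 * (n:ℝ)^2) with hδ
  have hδ0 : 0 < δ := by positivity
  have hδ1 : δ < 1 := by
    rw [hδ, div_lt_one (by positivity)]; nlinarith
  refine ⟨δ, ⟨hδ0, hδ1⟩, ?_⟩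
  intro a
  have hn1 : 1 ≤ n - 1 := by omega
  have hn21 : n - 1 = (n - 2) + 1 := by omega
  set S : ℝ := ∑ i ∈ Finset.Icc 1 (n-1), ‖a i‖ ^ 2 with hSdef
  set G : ℝ := ∑ i ∈ Finset.Icc 1 (n-2), ‖a i - a (i+1)‖ ^ 2 with hGdef
  set T : ℝ := ∑ i ∈ Finset.Icc 1 (n-2), ⟪a i, a (i+1)⟫ with hTdef
  have hS0 : 0 ≤ S := Finset.sum_nonneg fun i _ => by positivity
  have hG0 : 0 ≤ G := Finset.sum_nonneg fun i _ => by positivity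
  -- shift of index
  have hshift : ∑ i ∈ Finset.Icc 1 (n-2), ‖a (i+1)‖^2
      = ∑ i ∈ Finset.Icc 2 (n-1), ‖a i‖^2 := by
    rw [hn21, ← Finset.map_add_right_Icc 1 (n-2) 1, Finset.sum_map]
    rfl
  -- bottom split of S
  have hbot : S = ‖a 1‖^2 + ∑ i ∈ Finset.Icc 2 (n-1), ‖a i‖^2 := by
    rw [hSdef, Finset.Icc_eq_cons_Ioc hn1, Finset.sum_cons, ← Finset.Icc_add_one_left_eq_Ioc]; rfl
  -- top split of S
  have htop : S = (∑ i ∈ Finset.Icc 1 (n-2), ‖a i‖^2) + ‖a (n-1)‖^2 := by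
    rw [hSdef, hn21, Finset.sum_Icc_succ_top (by omega)]
  -- the identity 2T = 2S - ‖a 1‖² - ‖a (n-1)‖² - G
  have hid : 2 * T = 2 * S - ‖a 1‖^2 - ‖a (n-1)‖^2 - G := by
    have h1 : 2 * T = ∑ i ∈ Finset.Icc 1 (n-2),
        (‖a i‖^2 + ‖a (i+1)‖^2 - ‖a i - a (i+1)‖^2) := by
      rw [hTdef, Finset.mul_sum]
      refine Finset.sum_congr rfl fun i _ => ?_
      have := norm_sub_sq_real (a i) (a (i+1))
      linarith
    rw [h1]
    rw [Finset.sum_sub_distrib, Finset.sum_add_distrib, hshift, ← hGdef]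
    have := hbot; have := htop
    linarith
  -- telescoping bound
  set M : ℝ := ‖a 1‖ + ∑ j ∈ Finset.Icc 1 (n-2), ‖a j - a (j+1)‖ with hMdef
  have hM0 : 0 ≤ M := by
    rw [hMdef]
    have : (0:ℝ) ≤ ∑ j ∈ Finset.Icc 1 (n-2), ‖a j - a (j+1)‖ :=
      Finset.sum_nonneg fun j _ => norm_nonneg _
    positivity
  have key : ∀ i, 1 ≤ i → i ≤ n - 1 →
      ‖a i‖ ≤ ‖a 1‖ + ∑ j ∈ Finset.Icc 1 (i-1), ‖a j - a (j+1)‖ := by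
    intro i
    induction i with
    | zero => intro h; omega
    | succ k ih =>
      intro h1 h2
      rcases Nat.eq_zero_or_pos k with hk | hk
      · subst hk; simp
      · obtain ⟨k', rfl⟩ : ∃ k', k = k' + 1 := ⟨k - 1, by omega⟩
        have hrec := ih (by omega) (by omega)
        have tri : ‖a (k'+1+1)‖ ≤ ‖a (k'+1)‖ + ‖a (k'+1) - a (k'+1+1)‖ := by
          have h : a (k'+1+1) = a (k'+1) - (a (k'+1) - a (k'+1+1)) :=
            (sub_sub_cancel _ _).symm
          calc ‖a (k'+1+1)‖ = ‖a (k'+1) - (a (k'+1) - a (k'+1+1))‖ := by rw [← h]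
            _ ≤ ‖a (k'+1)‖ + ‖a (k'+1) - a (k'+1+1)‖ := norm_sub_le _ _
        have hsum : ∑ j ∈ Finset.Icc 1 (k'+1+1-1), ‖a j - a (j+1)‖
            = (∑ j ∈ Finset.Icc 1 (k'+1-1), ‖a j - a (j+1)‖)
              + ‖a (k'+1) - a (k'+1+1)‖ := by
          simp only [Nat.add_sub_cancel]
          rw [Finset.sum_Icc_succ_top (by omega)]
        rw [hsum]
        linarith
  have keyM : ∀ i ∈ Finset.Icc 1 (n-1), ‖a i‖ ≤ M := by
    intro i hi
    rw [Finset.mem_Icc] at hi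
    refine (key i hi.1 hi.2).trans ?_
    rw [hMdef]
    have hsub : Finset.Icc 1 (i-1) ⊆ Finset.Icc 1 (n-2) :=
      Finset.Icc_subset_Icc_right (by omega)
    have := Finset.sum_le_sum_of_subset_of_nonneg hsub
      (fun j _ _ => norm_nonneg (a j - a (j+1)))
    linarith
  -- S ≤ (n-1) * M²
  have hSM : S ≤ ((n:ℝ) - 1) * M^2 := by
    have h1 : S ≤ ∑ _i ∈ Finset.Icc 1 (n-1), M^2 := by
      refine Finset.sum_le_sum fun i hi => ?_
      have := keyM i hi
      nlinarith [norm_nonneg (a i)]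
    have h2 : ∑ _i ∈ Finset.Icc 1 (n-1), M^2
        = ((n-1 : ℕ) : ℝ) * M^2 := by
      rw [Finset.sum_const, Nat.card_Icc, nsmul_eq_mul]
      norm_num
    have h3 : ((n-1 : ℕ) : ℝ) = (n:ℝ) - 1 := by
      have := hn; push_cast [Nat.cast_sub (by omega : 1 ≤ n)]; ring
    rw [h2, h3] at h1
    exact h1
  -- Cauchy–Schwarz on the difference sum: M² ≤ 2n (‖a 1‖² + G)
  have hCS : M^2 ≤ 2 * (n:ℝ) * (‖a 1‖^2 + G) := by
    have hg := sq_sum_le_card_mul_sum_sq (s := Finset.Icc 1 (n-2))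
      (f := fun j => ‖a j - a (j+1)‖)
    have hcard : ((Finset.Icc 1 (n-2)).card : ℝ) ≤ (n:ℝ) := by
      rw [Nat.card_Icc]
      exact_mod_cast Nat.le_of_lt_succ (by omega)
    have hg2 : (∑ j ∈ Finset.Icc 1 (n-2), ‖a j - a (j+1)‖)^2 ≤ (n:ℝ) * G := by
      refine hg.trans ?_
      exact mul_le_mul_of_nonneg_right hcard hG0
    rw [hMdef]
    nlinarith [sq_nonneg (‖a 1‖ - ∑ j ∈ Finset.Icc 1 (n-2), ‖a j - a (j+1)‖),
      sq_nonneg (‖a 1‖), hG0, hnR]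
  -- combine
  have hfin : S ≤ 2 * (n:ℝ)^2 * (‖a 1‖^2 + G) := by
    have h := mul_le_mul_of_nonneg_left hCS (by linarith : (0:ℝ) ≤ (n:ℝ) - 1)
    calc S ≤ ((n:ℝ) - 1) * M^2 := hSM
      _ ≤ ((n:ℝ) - 1) * (2 * (n:ℝ) * (‖a 1‖^2 + G)) := h
      _ ≤ 2 * (n:ℝ)^2 * (‖a 1‖^2 + G) := by nlinarith [norm_nonneg (a 1), hG0, sq_nonneg (‖a 1‖)]
  -- δ^n ≤ δ
  have hpow : δ ^ n ≤ δ := by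
    calc δ ^ n ≤ δ ^ 1 := pow_le_pow_of_le_one hδ0.le hδ1.le (by omega)
      _ = δ := pow_one δ
  -- conclude
  have hδS : δ * S ≤ (‖a 1‖^2 + G) / 2 := by
    have hne : (n:ℝ) ≠ 0 := by positivity
    calc δ * S = S / (4*(n:ℝ)^2) := by rw [hδ]; ring
      _ ≤ (2 * (n:ℝ)^2 * (‖a 1‖^2 + G)) / (4*(n:ℝ)^2) := by gcongr
      _ = (‖a 1‖^2 + G) / 2 := by
          have hx : ∀ x : ℝ, (2 * (n:ℝ)^2 * x) / (4*(n:ℝ)^2) = x / 2 := fun x => by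
            field_simp; ring
          exact hx _
  clear_value S G T M δ
  clear hSdef hGdef hTdef hMdef hδ hshift hbot htop key keyM hSM hCS hfin
  have h1 : -S + T ≤ -(δ * S) := by
    have han1 : (0:ℝ) ≤ ‖a (n-1)‖^2 := by positivity
    linarith
  have h2 : δ ^ n * S ≤ δ * S := mul_le_mul_of_nonneg_right hpow hS0
  linarith
end

section
/- Linear growth of the position spread: let (x_i, v_i), i = 1, …, n, be a smooth solution of the controlled Cucker-Smale system on [0, T] with finite initial energy E₀ := (1/(4n))∑_{i,j=1}^n |v_i(0) − v_j(0)|² + E₂(x(0)). Then Γ(x(t)) ≤ Γ(x(0)) + 2√(n E₀) · t for all 0 ≤ t ≤ T, where Γ(x) := √(∑_{i,j=1}^n |x_i − x_j|²). -/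
open scoped BigOperators
open Filter MeasureTheory

noncomputable section

open scoped RealInnerProductSpace

variable {F : Type*} [NormedAddCommGroup F] [InnerProductSpace ℝ F]


theorem teleA {M : Type*} [AddCommMonoid M] (n : ℕ) (g : ℕ → M) :
    ∑ i ∈ Finset.Icc 1 n, (if 2 ≤ i then g i else 0) = ∑ i ∈ Finset.Icc 2 n, g i := by
  rw [← Finset.sum_filter]
  congr 1
  ext i
  simp only [Finset.mem_filter, Finset.mem_Icc]
  omega

theorem teleB {M : Type*} [AddCommMonoid M] (n : ℕ) (g : ℕ → M) :
    ∑ i ∈ Finset.Icc 1 n, (if i + 1 ≤ n then g (i+1) else 0) = ∑ i ∈ Finset.Icc 2 n, g i := by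
  rw [← Finset.sum_filter]
  apply Finset.sum_nbij' (fun a => a + 1) (fun a => a - 1)
  · intro a ha; simp only [Finset.mem_filter, Finset.mem_Icc] at *; omega
  · intro a ha; simp only [Finset.mem_filter, Finset.mem_Icc] at *; omega
  · intro a ha; simp only [Finset.mem_filter, Finset.mem_Icc] at ha; omega
  · intro a ha; simp only [Finset.mem_filter, Finset.mem_Icc] at ha; omega
  · intro a ha; rfl

theorem sum_inner_sub_sub (s : Finset ℕ) (a V : ℕ → F) :
    ∑ i ∈ s, ∑ j ∈ s, (⟪a i - a j, V i - V j⟫ : ℝ)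
      = 2 * s.card * ∑ i ∈ s, ⟪a i, V i⟫
        - 2 * ⟪∑ i ∈ s, a i, ∑ i ∈ s, V i⟫ := by
  simp only [inner_sub_left, inner_sub_right]
  simp only [Finset.sum_sub_distrib, Finset.sum_const, nsmul_eq_mul,
    ← inner_sum, ← sum_inner, ← Finset.mul_sum]
  ring

theorem sum_neg_of_antisymm (s : Finset ℕ) (f : ℕ → ℕ → F)
    (hf : ∀ i j, f j i = - f i j) :
    ∑ i ∈ s, ∑ j ∈ s, f i j = 0 := by
  have h1 : ∑ i ∈ s, ∑ j ∈ s, f i j = ∑ i ∈ s, ∑ j ∈ s, f j i := Finset.sum_comm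
  have h2 : ∑ i ∈ s, ∑ j ∈ s, f j i = - ∑ i ∈ s, ∑ j ∈ s, f i j := by
    rw [← Finset.sum_neg_distrib]
    exact Finset.sum_congr rfl fun i _ => by
      rw [← Finset.sum_neg_distrib]
      exact Finset.sum_congr rfl fun j _ => hf i j
  have h4 : (2:ℝ) • ∑ i ∈ s, ∑ j ∈ s, f i j = 0 := by
    rw [two_smul]; nth_rewrite 2 [h1]; rw [h2]; exact add_neg_cancel _
  rcases smul_eq_zero.1 h4 with h | h
  · norm_num at h
  · exact h

theorem energyDerivNonpos (n : ℕ) (hn : 1 ≤ n) (K M α β : ℝ) (hK : 0 ≤ K) (hM : 0 ≤ M)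
    (z X V a : ℕ → F)
    (ha : ∀ i ∈ Finset.Icc 1 n, a i =
      (K / n) • ∑ j ∈ (Finset.Icc 1 n).erase i, psiCS α ‖X j - X i‖ • (V j - V i)
        + M • uCS n (phiCS β) z X i) :
    (1/(4*(n:ℝ))) * ∑ i ∈ Finset.Icc 1 n, ∑ j ∈ Finset.Icc 1 n,
        ((⟪V i - V j, a i - a j⟫ : ℝ) + ⟪a i - a j, V i - V j⟫)
      + (M/2) * ∑ i ∈ Finset.Icc 2 n,
          phiCS β (‖X (i-1) - X i - z (i-1)‖^2) *
            ((⟪X (i-1) - X i - z (i-1), V (i-1) - V i⟫ : ℝ)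
              + ⟪V (i-1) - V i, X (i-1) - X i - z (i-1)⟫) ≤ 0 := by
  have hn' : (0:ℝ) < n := by exact_mod_cast Nat.lt_of_lt_of_le Nat.zero_lt_one hn
  set A := Finset.Icc 1 n with hA
  set w : ℕ → F := fun i =>
    (phiCS β (‖X (i-1) - X i - z (i-1)‖^2)) • (X (i-1) - X i - z (i-1)) with hw
  -- rewrite of the control
  have hu : ∀ i, uCS n (phiCS β) z X i
      = (if 2 ≤ i then w i else 0) - (if i+1 ≤ n then w (i+1) else 0) := by
    intro i; rfl
  -- sum of controls vanishes
  have hu0 : ∑ i ∈ A, uCS n (phiCS β) z X i = 0 := by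
    simp only [hu]
    rw [Finset.sum_sub_distrib, teleA, teleB, sub_self]
  -- erase sums are full sums
  have herase : ∀ i, ∑ j ∈ A.erase i, psiCS α ‖X j - X i‖ • (V j - V i)
      = ∑ j ∈ A, psiCS α ‖X j - X i‖ • (V j - V i) := by
    intro i
    exact Finset.sum_erase _ (by simp)
  -- total acceleration vanishes
  have hSa : ∑ i ∈ A, a i = 0 := by
    rw [Finset.sum_congr rfl ha, Finset.sum_add_distrib, ← Finset.smul_sum,
      ← Finset.smul_sum, hu0, smul_zero, add_zero,
      Finset.sum_congr rfl (fun i _ => herase i),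
      sum_neg_of_antisymm A _ (fun i j => by
        rw [norm_sub_rev, show V i - V j = -(V j - V i) by rw [neg_sub], smul_neg]),
      smul_zero]
  -- first double sum equals ∑ ⟪a i, V i⟫
  have hdouble : ∑ i ∈ A, ∑ j ∈ A, ((⟪V i - V j, a i - a j⟫ : ℝ) + ⟪a i - a j, V i - V j⟫)
      = 2 * ∑ i ∈ A, ∑ j ∈ A, (⟪a i - a j, V i - V j⟫ : ℝ) := by
    rw [Finset.mul_sum]
    refine Finset.sum_congr rfl fun i _ => ?_
    rw [Finset.mul_sum]
    refine Finset.sum_congr rfl fun j _ => ?_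
    rw [real_inner_comm (V i - V j) (a i - a j)]; ring
  have hcard : (A.card : ℝ) = n := by
    rw [hA, Nat.card_Icc]; push_cast [Nat.add_sub_cancel]; ring
  have hfirst : (1/(4*(n:ℝ))) * ∑ i ∈ A, ∑ j ∈ A,
      ((⟪V i - V j, a i - a j⟫ : ℝ) + ⟪a i - a j, V i - V j⟫)
      = ∑ i ∈ A, (⟪a i, V i⟫ : ℝ) := by
    rw [hdouble, sum_inner_sub_sub, hSa, inner_zero_left, hcard]
    field_simp
    ring
  -- split of ∑ ⟪a i, V i⟫
  have hsplit : ∑ i ∈ A, (⟪a i, V i⟫ : ℝ)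
      = (K/(n:ℝ)) * (∑ i ∈ A, ∑ j ∈ A, psiCS α ‖X j - X i‖ * ⟪V j - V i, V i⟫)
        + M * ∑ i ∈ A, (⟪uCS n (phiCS β) z X i, V i⟫ : ℝ) := by
    rw [Finset.mul_sum, Finset.mul_sum, ← Finset.sum_add_distrib]
    refine Finset.sum_congr rfl fun i hi => ?_
    rw [ha i hi, inner_add_left, real_inner_smul_left, real_inner_smul_left, herase, sum_inner]
    congr 2
    exact Finset.sum_congr rfl fun j _ => real_inner_smul_left _ _ _
  -- dissipation is nonpositive
  set Sd := ∑ i ∈ A, ∑ j ∈ A, psiCS α ‖X j - X i‖ * (⟪V j - V i, V i⟫ : ℝ) with hSdd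
  have hSdcomm : Sd = ∑ i ∈ A, ∑ j ∈ A, psiCS α ‖X i - X j‖ * (⟪V i - V j, V j⟫ : ℝ) :=
    Finset.sum_comm
  have hSd2 : Sd + Sd ≤ 0 := by
    nth_rewrite 2 [hSdcomm]
    rw [← Finset.sum_add_distrib]
    refine Finset.sum_nonpos fun i _ => ?_
    rw [← Finset.sum_add_distrib]
    refine Finset.sum_nonpos fun j _ => ?_
    rw [norm_sub_rev (X i) (X j), ← mul_add]
    have hps : 0 ≤ psiCS α ‖X j - X i‖ := Real.rpow_nonneg (norm_nonneg _) _
    have hid : (⟪V j - V i, V i⟫ : ℝ) + ⟪V i - V j, V j⟫ = -(‖V j - V i‖^2) := by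
      have h := real_inner_self_eq_norm_sq (V j - V i)
      simp only [inner_sub_left, inner_sub_right] at h ⊢
      have hc : (⟪V i, V j⟫ : ℝ) = ⟪V j, V i⟫ := real_inner_comm _ _
      linarith
    rw [hid]
    exact mul_nonpos_of_nonneg_of_nonpos hps (neg_nonpos.2 (sq_nonneg _))
  have hSdle : Sd ≤ 0 := by linarith
  -- control sum rewrite
  have hSu : ∑ i ∈ A, (⟪uCS n (phiCS β) z X i, V i⟫ : ℝ)
      = ∑ i ∈ Finset.Icc 2 n, ((⟪w i, V i⟫ : ℝ) - ⟪w i, V (i-1)⟫) := by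
    have hterm : ∀ i, (⟪uCS n (phiCS β) z X i, V i⟫ : ℝ)
        = (if 2 ≤ i then (⟪w i, V i⟫ : ℝ) else 0)
          - (if i + 1 ≤ n then (⟪w (i+1), V i⟫ : ℝ) else 0) := by
      intro i
      rw [hu, inner_sub_left]
      congr 1
      · split_ifs <;> simp
      · split_ifs <;> simp
    have h2 : ∑ x ∈ Finset.Icc 1 n, (if x + 1 ≤ n then (⟪w (x+1), V x⟫ : ℝ) else 0)
        = ∑ i ∈ Finset.Icc 2 n, (⟪w i, V (i-1)⟫ : ℝ) := by
      have h3 := teleB n (fun j => (⟪w j, V (j-1)⟫ : ℝ))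
      simpa using h3
    rw [Finset.sum_congr rfl (fun i _ => hterm i), Finset.sum_sub_distrib, hA, teleA, h2,
      ← Finset.sum_sub_distrib]
  -- cancellation of control and potential terms
  have hcancel : M * ∑ i ∈ A, (⟪uCS n (phiCS β) z X i, V i⟫ : ℝ)
      + (M/2) * ∑ i ∈ Finset.Icc 2 n,
          phiCS β (‖X (i-1) - X i - z (i-1)‖^2) *
            ((⟪X (i-1) - X i - z (i-1), V (i-1) - V i⟫ : ℝ)
              + ⟪V (i-1) - V i, X (i-1) - X i - z (i-1)⟫) = 0 := by
    rw [hSu, Finset.mul_sum, Finset.mul_sum, ← Finset.sum_add_distrib]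
    have key : ∀ (c mm : ℝ) (P u1 u2 : F),
        mm * (c * (⟪P, u2⟫ : ℝ) - c * ⟪P, u1⟫)
          + mm/2 * (c * ((⟪P, u1 - u2⟫ : ℝ) + ⟪u1 - u2, P⟫)) = 0 := by
      intro c mm P u1 u2
      rw [real_inner_comm P (u1 - u2), inner_sub_right]
      ring
    refine Finset.sum_eq_zero fun i _ => ?_
    show M * ((⟪w i, V i⟫ : ℝ) - ⟪w i, V (i-1)⟫) + _ = 0
    rw [hw]
    simp only [real_inner_smul_left]
    exact key _ _ _ _ _
  -- conclusion
  rw [hfirst, hsplit]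
  have hKn : (0:ℝ) ≤ K / n := div_nonneg hK hn'.le
  have hfin : K / (n:ℝ) * Sd ≤ 0 := mul_nonpos_of_nonneg_of_nonpos hKn hSdle
  linarith [hcancel]

theorem sumFinIcc {M : Type*} [AddCommMonoid M] (n : ℕ) (g : ℕ → M) :
    ∑ k : Fin n, g ((k : ℕ) + 1) = ∑ i ∈ Finset.Icc 1 n, g i := by
  rw [Fin.sum_univ_eq_sum_range (fun k => g (k + 1)) n]
  apply Finset.sum_nbij' (fun a => a + 1) (fun a => a - 1)
  · intro a ha; simp only [Finset.mem_range, Finset.mem_Icc] at *; omega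
  · intro a ha; simp only [Finset.mem_range, Finset.mem_Icc] at *; omega
  · intro a ha; simp only [Finset.mem_range, Finset.mem_Icc] at ha; omega
  · intro a ha; simp only [Finset.mem_range, Finset.mem_Icc] at ha; omega
  · intro a ha; rfl

theorem PhiDerivCS (β : ℝ) {y : ℝ} (hy : 0 ≤ y) :
    HasDerivAt (fun s => ∫ r in (0:ℝ)..s, phiCS β r) (phiCS β y) y := by
  have hc : ∀ r : ℝ, 0 ≤ r → ContinuousAt (phiCS β) r := by
    intro r hr
    have h1 : (0:ℝ) < 1 + r := by linarith
    have hco : ContinuousAt (fun s : ℝ => (1 + s)) r := by fun_prop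
    exact (Real.continuousAt_rpow_const _ _ (Or.inl (ne_of_gt h1))).comp hco
  have hint : IntervalIntegrable (phiCS β) MeasureTheory.volume 0 y := by
    apply ContinuousOn.intervalIntegrable
    intro r hr
    rw [Set.uIcc_of_le hy] at hr
    exact (hc r hr.1).continuousWithinAt
  refine intervalIntegral.integral_hasDerivAt_right hint ?_ (hc y hy)
  have hm : Measurable (phiCS β) := by unfold phiCS; fun_prop
  exact hm.stronglyMeasurable.stronglyMeasurableAtFilter

theorem hasDerivWithinAt_normSq {F : Type*} [NormedAddCommGroup F] [InnerProductSpace ℝ F]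
    {f : ℝ → F} {f' : F} {s : Set ℝ} {t : ℝ} (hf : HasDerivWithinAt f f' s t) :
    HasDerivWithinAt (fun u => ‖f u‖ ^ 2)
      ((inner ℝ (f t) f' : ℝ) + inner ℝ f' (f t)) s t := by
  have heq : (fun u => ‖f u‖ ^ 2) = (fun u => (inner ℝ (f u) (f u) : ℝ)) :=
    funext fun u => (real_inner_self_eq_norm_sq _).symm
  rw [heq]
  exact HasDerivWithinAt.inner ℝ hf hf

set_option maxHeartbeats 1000000 in
set_option synthInstance.maxHeartbeats 200000 in
/-- linear growth of the position spread:
`Γ(x(t)) ≤ Γ(x(0)) + 2√(nE₀) t` where `Γ(x) = √(∑_{i,j}|x_i - x_j|²)` and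
`E₀ = (1/(4n))∑_{i,j}|v_i(0) - v_j(0)|² + E₂(x(0))`. -/
theorem cs_position_spread_linear_growth
    {d n : ℕ} (hn : 2 ≤ n) (K M α β : ℝ) (hK : 0 ≤ K) (hM : 0 ≤ M)
    (hα : 0 < α) (hβ : 0 < β)
    (z : ℕ → EuclideanSpace ℝ (Fin d)) (x v : ℕ → ℝ → EuclideanSpace ℝ (Fin d))
    (T : ℝ) (hT : 0 < T)
    (hsol : IsCSSol n K M α β z x v (Set.Icc 0 T)) :
    ∀ t ∈ Set.Icc (0:ℝ) T,
      Real.sqrt (∑ i ∈ Finset.Icc 1 n, ∑ j ∈ Finset.Icc 1 n, ‖x i t - x j t‖ ^ 2)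
        ≤ Real.sqrt (∑ i ∈ Finset.Icc 1 n, ∑ j ∈ Finset.Icc 1 n, ‖x i 0 - x j 0‖ ^ 2)
          + 2 * Real.sqrt
              (n * (VflCS n (fun i => v i 0) + E2CS n M β z (fun i => x i 0))) * t := by
  classical
  have hn1 : 1 ≤ n := by omega
  have hn' : (0:ℝ) < n := by exact_mod_cast Nat.lt_of_lt_of_le Nat.zero_lt_one hn1
  set a : ℕ → ℝ → EuclideanSpace ℝ (Fin d) := fun i t =>
    (K / n) • ∑ j ∈ (Finset.Icc 1 n).erase i, psiCS α ‖x j t - x i t‖ • (v j t - v i t)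
      + M • uCS n (phiCS β) z (fun k => x k t) i with haDef
  have hx : ∀ i ∈ Finset.Icc 1 n, ∀ t ∈ Set.Icc (0:ℝ) T,
      HasDerivWithinAt (x i) (v i t) (Set.Icc (0:ℝ) T) t :=
    fun i hi t ht => (hsol i hi t ht).1
  have hv : ∀ i ∈ Finset.Icc 1 n, ∀ t ∈ Set.Icc (0:ℝ) T,
      HasDerivWithinAt (v i) (a i t) (Set.Icc (0:ℝ) T) t :=
    fun i hi t ht => (hsol i hi t ht).2
  set e : ℝ → ℝ := fun t => VflCS n (fun i => v i t) + E2CS n M β z (fun i => x i t) with he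
  set e' : ℝ → ℝ := fun t =>
    (1/(4*(n:ℝ))) * ∑ i ∈ Finset.Icc 1 n, ∑ j ∈ Finset.Icc 1 n,
        ((⟪v i t - v j t, a i t - a j t⟫ : ℝ) + ⟪a i t - a j t, v i t - v j t⟫)
      + (M/2) * ∑ i ∈ Finset.Icc 2 n,
          phiCS β (‖x (i-1) t - x i t - z (i-1)‖^2) *
            ((⟪x (i-1) t - x i t - z (i-1), v (i-1) t - v i t⟫ : ℝ)
              + ⟪v (i-1) t - v i t, x (i-1) t - x i t - z (i-1)⟫) with he'
  have hde : ∀ t ∈ Set.Icc (0:ℝ) T, HasDerivWithinAt e (e' t) (Set.Icc (0:ℝ) T) t := by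
    intro t ht
    have h1 : HasDerivWithinAt (fun u => VflCS n (fun i => v i u))
        ((1/(4*(n:ℝ))) * ∑ i ∈ Finset.Icc 1 n, ∑ j ∈ Finset.Icc 1 n,
          ((⟪v i t - v j t, a i t - a j t⟫ : ℝ) + ⟪a i t - a j t, v i t - v j t⟫))
        (Set.Icc (0:ℝ) T) t := by
      simp only [VflCS]
      apply HasDerivWithinAt.const_mul
      apply HasDerivWithinAt.fun_sum
      intro i hi
      apply HasDerivWithinAt.fun_sum
      intro j hj
      exact hasDerivWithinAt_normSq ((hv i hi t ht).sub (hv j hj t ht))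
    have h2 : HasDerivWithinAt (fun u => E2CS n M β z (fun i => x i u))
        ((M/2) * ∑ i ∈ Finset.Icc 2 n,
          phiCS β (‖x (i-1) t - x i t - z (i-1)‖^2) *
            ((⟪x (i-1) t - x i t - z (i-1), v (i-1) t - v i t⟫ : ℝ)
              + ⟪v (i-1) t - v i t, x (i-1) t - x i t - z (i-1)⟫))
        (Set.Icc (0:ℝ) T) t := by
      simp only [E2CS]
      apply HasDerivWithinAt.const_mul
      apply HasDerivWithinAt.fun_sum
      intro i hi
      simp only [Finset.mem_Icc] at hi
      have hi1 : i - 1 ∈ Finset.Icc 1 n := by simp only [Finset.mem_Icc]; omega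
      have hi2 : i ∈ Finset.Icc 1 n := by simp only [Finset.mem_Icc]; omega
      have hq : HasDerivWithinAt (fun u => ‖x (i-1) u - x i u - z (i-1)‖^2)
          ((⟪x (i-1) t - x i t - z (i-1), v (i-1) t - v i t⟫ : ℝ)
            + ⟪v (i-1) t - v i t, x (i-1) t - x i t - z (i-1)⟫) (Set.Icc (0:ℝ) T) t :=
        hasDerivWithinAt_normSq (((hx _ hi1 t ht).sub (hx i hi2 t ht)).sub_const _)
      have hPhi := PhiDerivCS β (sq_nonneg (‖x (i-1) t - x i t - z (i-1)‖))
      exact hPhi.comp_hasDerivWithinAt t hq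
    exact h1.add h2
  have he'le : ∀ t : ℝ, e' t ≤ 0 := by
    intro t
    exact energyDerivNonpos n hn1 K M α β hK hM z (fun k => x k t) (fun k => v k t)
      (fun k => a k t) (fun i _ => rfl)
  have hant : AntitoneOn e (Set.Icc (0:ℝ) T) := by
    apply antitoneOn_of_deriv_nonpos (convex_Icc 0 T)
    · exact fun u hu => (hde u hu).continuousWithinAt
    · intro u hu
      rw [interior_Icc] at hu
      exact ((hde u (Set.Ioo_subset_Icc_self hu)).hasDerivAt
        (Icc_mem_nhds hu.1 hu.2)).differentiableAt.differentiableWithinAt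
    · intro u hu
      rw [interior_Icc] at hu
      rw [((hde u (Set.Ioo_subset_Icc_self hu)).hasDerivAt (Icc_mem_nhds hu.1 hu.2)).deriv]
      exact he'le u
  have h0mem : (0:ℝ) ∈ Set.Icc (0:ℝ) T := ⟨le_refl 0, hT.le⟩
  have hmono : ∀ t ∈ Set.Icc (0:ℝ) T, e t ≤ e 0 :=
    fun t ht => hant h0mem ht ht.1
  have hE2nonneg : ∀ X : ℕ → EuclideanSpace ℝ (Fin d), 0 ≤ E2CS n M β z X := by
    intro X
    unfold E2CS
    apply mul_nonneg (by positivity)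
    apply Finset.sum_nonneg
    intro i _
    apply intervalIntegral.integral_nonneg (sq_nonneg _)
    intro u hu
    exact Real.rpow_nonneg (by linarith [hu.1]) _
  have hVflnonneg : ∀ V : ℕ → EuclideanSpace ℝ (Fin d), 0 ≤ VflCS n V := by
    intro V
    unfold VflCS
    positivity
  have he0 : 0 ≤ e 0 := add_nonneg (hVflnonneg _) (hE2nonneg _)
  have hvb : ∀ t ∈ Set.Icc (0:ℝ) T, ∑ i ∈ Finset.Icc 1 n, ∑ j ∈ Finset.Icc 1 n,
      ‖v i t - v j t‖^2 ≤ 4*(n:ℝ)*(e 0) := by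
    intro t ht
    have h1 : VflCS n (fun i => v i t) ≤ e 0 := by
      have h3 := hmono t ht
      have h2 := hE2nonneg (fun i => x i t)
      have h4 : e t = VflCS n (fun i => v i t) + E2CS n M β z (fun i => x i t) := rfl
      linarith
    unfold VflCS at h1
    have h4 : (0:ℝ) < 4*(n:ℝ) := by positivity
    calc ∑ i ∈ Finset.Icc 1 n, ∑ j ∈ Finset.Icc 1 n, ‖v i t - v j t‖^2
        = (4*(n:ℝ)) * ((1 / (4 * (n:ℕ))) * ∑ i ∈ Finset.Icc 1 n, ∑ j ∈ Finset.Icc 1 n,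
            ‖v i t - v j t‖^2) := by
          field_simp
      _ ≤ (4*(n:ℝ)) * e 0 := mul_le_mul_of_nonneg_left h1 h4.le
  -- the PiLp-valued position-difference map
  set Φl := (PiLp.continuousLinearEquiv 2 ℝ
    (fun _ : Fin n × Fin n => EuclideanSpace ℝ (Fin d))).symm with hPhil
  set Fm : ℝ → PiLp 2 (fun _ : Fin n × Fin n => EuclideanSpace ℝ (Fin d)) :=
    fun u => Φl (fun p => x ((p.1:ℕ)+1) u - x ((p.2:ℕ)+1) u) with hFm
  have hmem : ∀ p : Fin n, ((p:ℕ)+1) ∈ Finset.Icc 1 n := by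
    intro p
    simp only [Finset.mem_Icc]
    have := p.isLt
    omega
  haveI : ContinuousSMul ℝ (PiLp 2 (fun _ : Fin n × Fin n => EuclideanSpace ℝ (Fin d))) := inferInstance
  have hFd : ∀ u ∈ Set.Icc (0:ℝ) T, HasDerivWithinAt Fm
      (Φl (fun p : Fin n × Fin n => v ((p.1:ℕ)+1) u - v ((p.2:ℕ)+1) u))
      (Set.Icc (0:ℝ) T) u := by
    intro u hu
    exact (Φl.toContinuousLinearMap.hasFDerivAt).comp_hasDerivWithinAt u
      (hasDerivWithinAt_pi.2 fun p => ((hx _ (hmem p.1) u hu).sub (hx _ (hmem p.2) u hu)))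
  have hnormF : ∀ (y : ℕ → ℕ → EuclideanSpace ℝ (Fin d)),
      ‖Φl (fun p : Fin n × Fin n => y ((p.1:ℕ)+1) ((p.2:ℕ)+1))‖
        = Real.sqrt (∑ i ∈ Finset.Icc 1 n, ∑ j ∈ Finset.Icc 1 n, ‖y i j‖^2) := by
    intro y
    rw [PiLp.norm_eq_of_L2]
    congr 1
    have hcoords : ∀ (f : ∀ _ : Fin n × Fin n, EuclideanSpace ℝ (Fin d)) (p : Fin n × Fin n),
        (Φl f) p = f p := fun f p => rfl
    simp only [hcoords]
    calc ∑ p : Fin n × Fin n, ‖y ((p.1:ℕ)+1) ((p.2:ℕ)+1)‖^2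
        = ∑ p1 : Fin n, ∑ p2 : Fin n, ‖y ((p1:ℕ)+1) ((p2:ℕ)+1)‖^2 := Fintype.sum_prod_type _
      _ = ∑ p1 : Fin n, ∑ j ∈ Finset.Icc 1 n, ‖y ((p1:ℕ)+1) j‖^2 :=
          Finset.sum_congr rfl fun p1 _ => sumFinIcc n (fun j => ‖y ((p1:ℕ)+1) j‖^2)
      _ = ∑ i ∈ Finset.Icc 1 n, ∑ j ∈ Finset.Icc 1 n, ‖y i j‖^2 :=
          sumFinIcc n (fun i => ∑ j ∈ Finset.Icc 1 n, ‖y i j‖^2)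
  set C : ℝ := 2 * Real.sqrt ((n:ℝ) * (VflCS n (fun i => v i 0)
    + E2CS n M β z (fun i => x i 0))) with hC
  have hCe : C = 2 * Real.sqrt ((n:ℝ) * e 0) := rfl
  have hbound : ∀ u ∈ Set.Icc (0:ℝ) T,
      ‖Φl (fun p : Fin n × Fin n => v ((p.1:ℕ)+1) u - v ((p.2:ℕ)+1) u)‖ ≤ C := by
    intro u hu
    rw [hnormF (fun i j => v i u - v j u), hCe]
    calc Real.sqrt (∑ i ∈ Finset.Icc 1 n, ∑ j ∈ Finset.Icc 1 n, ‖v i u - v j u‖^2)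
        ≤ Real.sqrt (4*(n:ℝ)*(e 0)) := Real.sqrt_le_sqrt (hvb u hu)
      _ = 2 * Real.sqrt ((n:ℝ) * e 0) := by
          rw [show (4:ℝ)*(n:ℝ)*(e 0) = 2^2 * ((n:ℝ) * e 0) by ring,
            Real.sqrt_mul (by positivity) _, Real.sqrt_sq (by norm_num)]
  intro t ht
  have hlip : ‖Fm t - Fm 0‖ ≤ C * ‖t - 0‖ :=
    Convex.norm_image_sub_le_of_norm_hasDerivWithin_le hFd hbound (convex_Icc 0 T) h0mem ht
  rw [sub_zero, Real.norm_eq_abs, abs_of_nonneg ht.1] at hlip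
  have hΓt : Real.sqrt (∑ i ∈ Finset.Icc 1 n, ∑ j ∈ Finset.Icc 1 n, ‖x i t - x j t‖^2)
      = ‖Fm t‖ := (hnormF (fun i j => x i t - x j t)).symm
  have hΓ0 : Real.sqrt (∑ i ∈ Finset.Icc 1 n, ∑ j ∈ Finset.Icc 1 n, ‖x i 0 - x j 0‖^2)
      = ‖Fm 0‖ := (hnormF (fun i j => x i 0 - x j 0)).symm
  rw [hΓt, hΓ0]
  have htri : ‖Fm t‖ ≤ ‖Fm 0‖ + ‖Fm t - Fm 0‖ := by
    have := norm_sub_norm_le (Fm t) (Fm 0)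
    linarith
  calc ‖Fm t‖ ≤ ‖Fm 0‖ + ‖Fm t - Fm 0‖ := htri
    _ ≤ ‖Fm 0‖ + C * t := by linarith
end
end

section
/- Concavity-type inequality for the antiderivative of φ (key step in the proof of Corollary 6.4): let β ∈ (0, 1) and define Φ(s) := ((1+s)^{1−β} − 1)/(1−β) for s ≥ 0. Then for every c ∈ (0, 1) and every s ≥ 0, Φ(c^{1/(1−β)} · s) ≤ c · Φ(s). -/
/-- concavity-type inequality for the antiderivative
`Φ(s) = ((1+s)^{1-β} - 1)/(1-β)` of `φ(r) = (1+r)^{-β}` with β ∈ (0,1):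
for every c ∈ (0,1) and s ≥ 0, `Φ(c^{1/(1-β)} s) ≤ c Φ(s)`. -/
theorem Phi_rpow_scaling_le (β c s : ℝ)
    (hβ0 : 0 < β) (hβ1 : β < 1) (hc : c ∈ Set.Ioo (0:ℝ) 1) (hs : 0 ≤ s) :
    ((1 + c ^ ((1:ℝ) / (1 - β)) * s) ^ (1 - β) - 1) / (1 - β)
      ≤ c * (((1 + s) ^ (1 - β) - 1) / (1 - β)) := by
  obtain ⟨hc0, hc1⟩ := hc
  set γ := 1 - β with hγdef
  have hγ0 : 0 < γ := by simp only [hγdef]; linarith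
  have hγ1 : γ < 1 := by simp only [hγdef]; linarith
  set a := c ^ ((1:ℝ) / γ) with hadef
  have ha0 : 0 < a := Real.rpow_pos_of_pos hc0 _
  have ha1 : a ≤ 1 := Real.rpow_le_one hc0.le hc1.le (by positivity)
  have hca : a ^ γ = c := by
    rw [hadef, ← Real.rpow_mul hc0.le, one_div_mul_cancel hγ0.ne', Real.rpow_one]
  rw [mul_div_assoc', div_le_div_iff_of_pos_right hγ0]
  -- goal: (1 + a * s) ^ γ - 1 ≤ c * ((1 + s) ^ γ - 1)
  set g : ℝ → ℝ := fun t => c * ((1 + t) ^ γ - 1) - ((1 + a * t) ^ γ - 1) with hgdef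
  have key : ∀ t ∈ Set.Ici (0:ℝ), HasDerivAt g
      (c * (γ * (1 + t) ^ (γ - 1)) - γ * (1 + a * t) ^ (γ - 1) * a) t := by
    intro t ht
    have h1 : (0:ℝ) < 1 + t := by simp at ht; linarith
    have h2 : (0:ℝ) < 1 + a * t := by simp at ht; nlinarith
    have d1 : HasDerivAt (fun t : ℝ => (1 + t) ^ γ) (γ * (1 + t) ^ (γ - 1)) t := by
      have := (Real.hasDerivAt_rpow_const (x := 1 + t) (p := γ) (Or.inl h1.ne')).comp t
        ((hasDerivAt_id t).const_add 1)
      simpa [Function.comp_def] using this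
    have d2 : HasDerivAt (fun t : ℝ => (1 + a * t) ^ γ)
        (γ * (1 + a * t) ^ (γ - 1) * a) t := by
      have := (Real.hasDerivAt_rpow_const (x := 1 + a * t) (p := γ) (Or.inl h2.ne')).comp t
        (((hasDerivAt_id t).const_mul a).const_add 1)
      simpa [mul_comm, mul_assoc, Function.comp_def] using this
    exact ((d1.sub_const 1).const_mul c).sub (d2.sub_const 1)
  have hmono : MonotoneOn g (Set.Ici 0) := by
    apply monotoneOn_of_deriv_nonneg (convex_Ici 0)
    · exact continuousOn_of_forall_continuousAt fun t ht =>
        ((key t ht).continuousAt)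
    · intro t ht
      rw [interior_Ici] at ht
      exact ((key t (Set.Ioi_subset_Ici_self ht)).differentiableAt).differentiableWithinAt
    · intro t ht
      rw [interior_Ici] at ht
      rw [(key t (Set.Ioi_subset_Ici_self ht)).deriv]
      have h1 : (0:ℝ) < 1 + t := by simp at ht; linarith
      have h2 : a * (1 + t) ≤ 1 + a * t := by nlinarith
      have h3 : (0:ℝ) < a * (1 + t) := by positivity
      have h4 : (1 + a * t) ^ (γ - 1) ≤ (a * (1 + t)) ^ (γ - 1) :=
        Real.rpow_le_rpow_of_nonpos h3 h2 (by linarith)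
      have h5 : (a * (1 + t)) ^ (γ - 1) = a ^ (γ - 1) * (1 + t) ^ (γ - 1) :=
        Real.mul_rpow ha0.le h1.le
      have h6 : a * a ^ (γ - 1) = c := by
        rw [← hca, ← Real.rpow_one_add' ha0.le (by intro h; linarith)]
        ring_nf
      have h7 : γ * (1 + a * t) ^ (γ - 1) * a ≤ c * (γ * (1 + t) ^ (γ - 1)) := by
        calc γ * (1 + a * t) ^ (γ - 1) * a ≤ γ * (a ^ (γ - 1) * (1 + t) ^ (γ - 1)) * a := by
              exact mul_le_mul_of_nonneg_right
                (mul_le_mul_of_nonneg_left (h4.trans_eq h5) hγ0.le) ha0.le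
          _ = c * (γ * (1 + t) ^ (γ - 1)) := by rw [← h6]; ring
      linarith
  have h0 : g 0 = 0 := by simp [hgdef]
  have := hmono (Set.self_mem_Ici) (Set.mem_Ici.mpr hs) hs
  rw [h0] at this
  simpa [hgdef] using sub_nonneg.mp this
end
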